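/- Every integer n has a unique sparse binary representation: there exists exactly one finitely supported function c : ℕ → ℤ with c i ∈ {-1, 0, 1} for all i, satisfying the non-adjacency condition (for all i, c i ≠ 0 → c (i+1) = 0), and n = Σ_i c i · 2^i. -/

import Mathlib

private def D (n : ℤ) : ℤ := if n % 2 = 0 then 0 else 2 - n % 4

private noncomputable def Fcons (d : ℤ) (f : ℕ →₀ ℤ) : ℕ →₀ ℤ :=
  Finsupp.single 0 d + f.embDomain ⟨Nat.succ, Nat.succ_injective⟩

private lemma Fcons_zero (d : ℤ) (f : ℕ →₀ ℤ) : Fcons d f 0 = d := by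
  rw [Fcons, Finsupp.add_apply, Finsupp.single_eq_same,
    Finsupp.embDomain_notin_range, add_zero]
  rintro ⟨i, hi⟩
  exact Nat.succ_ne_zero i hi

private lemma Fcons_succ (d : ℤ) (f : ℕ →₀ ℤ) (i : ℕ) : Fcons d f (i + 1) = f i := by
  rw [Fcons, Finsupp.add_apply, Finsupp.single_eq_of_ne (by omega)]
  have := Finsupp.embDomain_apply_self ⟨Nat.succ, Nat.succ_injective⟩ f i
  simpa using this

private def val (f : ℕ →₀ ℤ) : ℤ := ∑ i ∈ f.support, f i * 2 ^ i

private lemma val_Fcons (d : ℤ) (f : ℕ →₀ ℤ) : val (Fcons d f) = d + 2 * val f := by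
  have key : ∀ g : ℕ →₀ ℤ, (∑ i ∈ g.support, g i * 2 ^ i) = g.sum (fun i a => a * 2 ^ i) :=
    fun g => rfl
  unfold val Fcons
  rw [key, key,
    Finsupp.sum_add_index' (by simp) (by intros; ring),
    Finsupp.sum_single_index (by simp), Finsupp.sum_embDomain]
  simp only [Function.Embedding.coeFn_mk, Finsupp.sum, Finset.mul_sum]
  congr 1
  · ring
  · exact Finset.sum_congr rfl (fun i _ => by rw [pow_succ]; ring)

private noncomputable def naf (n : ℤ) : ℕ →₀ ℤ :=
  if n = 0 then 0 else Fcons (D n) (naf ((n - D n) / 2))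
termination_by n.natAbs
decreasing_by
  unfold D
  split <;> omega

private lemma naf_def (n : ℤ) :
    naf n = if n = 0 then 0 else Fcons (D n) (naf ((n - D n) / 2)) := by
  rw [naf]

private lemma D_mem (n : ℤ) : D n ∈ ({-1, 0, 1} : Set ℤ) := by
  simp only [Set.mem_insert_iff, Set.mem_singleton_iff]
  unfold D; split <;> omega

private lemma D_next_even (n : ℤ) (h : D n ≠ 0) : ((n - D n) / 2) % 2 = 0 := by
  unfold D at *; split at h
  · omega
  · split at * <;> omega

private lemma D_eq_zero (n : ℤ) (h : n % 2 = 0) : D n = 0 := by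
  unfold D; rw [if_pos h]

private lemma D_val (n : ℤ) : n = D n + 2 * ((n - D n) / 2) := by
  unfold D; split <;> omega

private lemma naf_mem (i : ℕ) : ∀ n : ℤ, naf n i ∈ ({-1, 0, 1} : Set ℤ) := by
  induction i with
  | zero =>
    intro n
    rw [naf_def]
    split
    · simp
    · rw [Fcons_zero]; exact D_mem n
  | succ i ih =>
    intro n
    rw [naf_def]
    split
    · simp
    · rw [Fcons_succ]; exact ih _

private lemma naf_naf (i : ℕ) : ∀ n : ℤ, naf n i ≠ 0 → naf n (i + 1) = 0 := by
  induction i with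
  | zero =>
    intro n h
    rw [naf_def] at h ⊢
    split at h
    · simp at h
    · rw [Fcons_zero] at h
      next hn =>
      simp only [hn, if_false, Fcons_succ]
      rw [naf_def]
      split
      · simp
      · rw [Fcons_zero]
        exact D_eq_zero _ (D_next_even n h)
  | succ i ih =>
    intro n h
    rw [naf_def] at h ⊢
    split at h
    · simp at h
    · next hn =>
      simp only [hn, if_false, Fcons_succ] at h ⊢
      exact ih _ h

private lemma naf_val (n : ℤ) : val (naf n) = n := by
  by_cases h : n = 0
  · subst h; rw [naf_def]; simp [val]
  · rw [naf_def, if_neg h, val_Fcons, naf_val ((n - D n) / 2)]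
    exact (D_val n).symm
termination_by n.natAbs
decreasing_by
  unfold D
  split <;> omega

private lemma Fcons_decomp (c : ℕ →₀ ℤ) :
    c = Fcons (c 0) (Finsupp.comapDomain Nat.succ c Nat.succ_injective.injOn) := by
  ext i
  cases i with
  | zero => rw [Fcons_zero]
  | succ i => rw [Fcons_succ, Finsupp.comapDomain_apply]

private lemma val_parity (c : ℕ →₀ ℤ) : val c % 2 = c 0 % 2 := by
  conv_lhs => rw [Fcons_decomp c]
  rw [val_Fcons]
  omega

private lemma uniq (N : ℕ) : ∀ c : ℕ →₀ ℤ,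
    (∀ i, c i ∈ ({-1, 0, 1} : Set ℤ)) → (∀ i, c i ≠ 0 → c (i + 1) = 0) →
    (∀ i, N ≤ i → c i = 0) → c = naf (val c) := by
  induction N with
  | zero =>
    intro c _ _ hbd
    have hc : c = 0 := by ext i; exact hbd i (Nat.zero_le i)
    subst hc
    rw [naf_def]
    simp [val]
  | succ N ih =>
    intro c hmem hnaf hbd
    set c' := Finsupp.comapDomain Nat.succ c Nat.succ_injective.injOn with hc'
    have hc'app : ∀ i, c' i = c (i + 1) := fun i => Finsupp.comapDomain_apply ..
    have hdec : c = Fcons (c 0) c' := Fcons_decomp c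
    have hval : val c = c 0 + 2 * val c' := by rw [hdec, val_Fcons, ← hdec]
    have hc'eq : c' = naf (val c') := by
      apply ih
      · intro i; rw [hc'app]; exact hmem _
      · intro i h; rw [hc'app] at *; exact hnaf _ h
      · intro i hi; rw [hc'app]; exact hbd _ (by omega)
    have hmem0 := hmem 0
    simp only [Set.mem_insert_iff, Set.mem_singleton_iff] at hmem0
    by_cases h0 : val c = 0
    · -- then c 0 = 0 and val c' = 0, so c = 0
      have h00 : c 0 = 0 := by
        have := val_parity c; omega
      have hv' : val c' = 0 := by omega
      rw [h0, naf_def, if_pos rfl]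
      rw [hdec, h00, hc'eq, hv', naf_def, if_pos rfl]
      ext i
      cases i with
      | zero => rw [Fcons_zero]; rfl
      | succ i => rw [Fcons_succ]; rfl
    · rw [naf_def, if_neg h0]
      have hD : D (val c) = c 0 := by
        rcases hmem0 with h | h | h
        · have hpar : val c' % 2 = 0 := by
            have := val_parity c'
            have : c' 0 = 0 := by rw [hc'app]; exact hnaf 0 (by omega)
            omega
          unfold D; split <;> omega
        · unfold D; split <;> omega
        · have hpar : val c' % 2 = 0 := by
            have := val_parity c'
            have : c' 0 = 0 := by rw [hc'app]; exact hnaf 0 (by omega)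
            omega
          unfold D; split <;> omega
      rw [hD]
      have : (val c - c 0) / 2 = val c' := by omega
      rw [this, ← hc'eq, ← hdec]

/-- Every integer has exactly one sparse (non-adjacent form) binary representation. -/
theorem sparse_binary_representation_existsUnique (n : ℤ) :
    ∃! c : ℕ →₀ ℤ,
      (∀ i, c i ∈ ({-1, 0, 1} : Set ℤ)) ∧
      (∀ i, c i ≠ 0 → c (i + 1) = 0) ∧
      n = ∑ i ∈ c.support, c i * 2 ^ i := by
  refine ⟨naf n, ⟨fun i => naf_mem i n, fun i => naf_naf i n, (naf_val n).symm⟩, ?_⟩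
  rintro c ⟨hmem, hnaf, hval⟩
  have hbd : ∀ i, c.support.sup id + 1 ≤ i → c i = 0 := by
    intro i hi
    by_contra h
    have : i ∈ c.support := Finsupp.mem_support_iff.mpr h
    have := Finset.le_sup (f := id) this
    simp at this
    omega
  have := uniq (c.support.sup id + 1) c hmem hnaf hbd
  rw [this]
  congr 1
  unfold val
  exact hval.symm
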